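/- For all real τ ≥ −1.3 and all δ ≥ 0, the Gaussian Mills ratio satisfies R(τ) ≥ R(τ + δ) ≥ R(τ)·exp(−1.5·δ). -/

import Mathlib

open MeasureTheory Real Set

/-- The standard Gaussian density `φ(x) = (1/√(2π))·exp(−x²/2)`. -/
noncomputable def gaussPDF (x : ℝ) : ℝ := (Real.sqrt (2 * Real.pi))⁻¹ * Real.exp (-x ^ 2 / 2)

/-- The Gaussian Q-function `Q(τ) = ∫_τ^∞ φ(x) dx`. -/
noncomputable def gaussQ (τ : ℝ) : ℝ := ∫ x in Set.Ioi τ, gaussPDF x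

/-- The Gaussian Mills ratio `R(τ) = Q(τ)/φ(τ)`. -/
noncomputable def millsR (τ : ℝ) : ℝ := gaussQ τ / gaussPDF τ

section MillsAux

open Filter Topology intervalIntegral

lemma gaussPDF_pos (x : ℝ) : 0 < gaussPDF x := by
  unfold gaussPDF
  have : (0:ℝ) < Real.sqrt (2 * Real.pi) := Real.sqrt_pos.mpr (by positivity)
  positivity

lemma gaussPDF_fun_eq :
    gaussPDF = fun x => (Real.sqrt (2 * Real.pi))⁻¹ * Real.exp (-(2⁻¹:ℝ) * x ^ 2) := by
  funext x
  unfold gaussPDF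
  congr 1
  ring_nf

lemma continuous_gaussPDF : Continuous gaussPDF := by
  unfold gaussPDF; fun_prop

lemma integrable_gaussPDF : Integrable gaussPDF := by
  rw [gaussPDF_fun_eq]
  exact (integrable_exp_neg_mul_sq (by norm_num : (0:ℝ) < 2⁻¹)).const_mul _

lemma integral_gaussPDF : ∫ x, gaussPDF x = 1 := by
  rw [gaussPDF_fun_eq]
  rw [MeasureTheory.integral_const_mul, integral_gaussian]
  rw [show Real.pi / 2⁻¹ = 2 * Real.pi by ring]
  rw [inv_mul_cancel₀ (Real.sqrt_pos.mpr (by positivity)).ne']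

lemma hasDerivAt_gaussPDF (x : ℝ) : HasDerivAt gaussPDF (-x * gaussPDF x) x := by
  have h1 : HasDerivAt (fun y : ℝ => -y ^ 2 / 2) (-x) x := by
    have := ((hasDerivAt_pow 2 x).neg).div_const 2
    simpa using this.congr_deriv (by ring)
  have h2 := (h1.exp).const_mul (Real.sqrt (2 * Real.pi))⁻¹
  have h3 : -x * gaussPDF x
      = (Real.sqrt (2 * Real.pi))⁻¹ * (Real.exp (-x ^ 2 / 2) * -x) := by
    unfold gaussPDF; ring
  rw [h3]
  exact h2

lemma gaussPDF_even (x : ℝ) : gaussPDF (-x) = gaussPDF x := by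
  unfold gaussPDF; ring_nf

lemma gaussQ_eq (t : ℝ) : gaussQ t = gaussQ 0 - ∫ x in (0:ℝ)..t, gaussPDF x := by
  have key : ∀ a b : ℝ, a ≤ b → gaussQ a = gaussQ b + ∫ x in a..b, gaussPDF x := by
    intro a b hab
    rw [intervalIntegral.integral_of_le hab]
    have hsplit : Ioc a b ∪ Ioi b = Ioi a := Ioc_union_Ioi_eq_Ioi hab
    have hdisj : Disjoint (Ioc a b) (Ioi b) := Ioc_disjoint_Ioi le_rfl
    unfold gaussQ
    rw [← hsplit, setIntegral_union hdisj measurableSet_Ioi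
      integrable_gaussPDF.integrableOn integrable_gaussPDF.integrableOn]
    ring
  rcases le_total 0 t with h | h
  · have := key 0 t h
    linarith [this]
  · have := key t 0 h
    rw [intervalIntegral.integral_symm]
    linarith [this]

lemma hasDerivAt_gaussQ (t : ℝ) : HasDerivAt gaussQ (-(gaussPDF t)) t := by
  have h : HasDerivAt (fun u => ∫ x in (0:ℝ)..u, gaussPDF x) (gaussPDF t) t := by
    refine intervalIntegral.integral_hasDerivAt_right
      integrable_gaussPDF.intervalIntegrable
      continuous_gaussPDF.stronglyMeasurable.stronglyMeasurableAtFilter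
      continuous_gaussPDF.continuousAt
  have h2 := h.const_sub (gaussQ 0)
  have : gaussQ = fun t => gaussQ 0 - ∫ x in (0:ℝ)..t, gaussPDF x := funext gaussQ_eq
  rw [this]
  exact h2

lemma gaussQ_pos (t : ℝ) : 0 < gaussQ t := by
  unfold gaussQ
  rw [setIntegral_pos_iff_support_of_nonneg_ae
    (Filter.Eventually.of_forall fun x => (gaussPDF_pos x).le)
    integrable_gaussPDF.integrableOn]
  have hs : Function.support gaussPDF = univ := eq_univ_of_forall fun x => (gaussPDF_pos x).ne'
  simp [hs, Real.volume_Ioi]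

lemma tendsto_gaussPDF_atTop : Tendsto gaussPDF atTop (𝓝 0) := by
  rw [gaussPDF_fun_eq]
  have h1 : Tendsto (fun x : ℝ => -(2⁻¹:ℝ) * x ^ 2) atTop atBot := by
    apply Tendsto.const_mul_atTop_of_neg (by norm_num : (-(2⁻¹:ℝ)) < 0)
    exact tendsto_pow_atTop (by norm_num)
  have h2 := Real.tendsto_exp_atBot.comp h1
  have h3 := h2.const_mul (Real.sqrt (2 * Real.pi))⁻¹
  simpa using h3

lemma integral_xGaussPDF {a : ℝ} (ha : 0 ≤ a) :
    ∫ x in Ioi a, x * gaussPDF x = gaussPDF a := by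
  have hderiv : ∀ x ∈ Ici a, HasDerivAt (fun y => -(gaussPDF y)) (x * gaussPDF x) x := by
    intro x _
    have := (hasDerivAt_gaussPDF x).neg
    exact this.congr_deriv (by ring)
  have hpos : ∀ x ∈ Ioi a, 0 ≤ x * gaussPDF x := fun x hx =>
    mul_nonneg (le_trans ha (le_of_lt hx)) (gaussPDF_pos x).le
  have htend : Tendsto (fun y => -(gaussPDF y)) atTop (𝓝 0) := by
    simpa using tendsto_gaussPDF_atTop.neg
  have := integral_Ioi_of_hasDerivAt_of_nonneg' hderiv hpos htend
  simpa using this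

lemma mills_ineq {t : ℝ} (ht : 0 < t) : t * gaussQ t ≤ gaussPDF t := by
  have hint : IntegrableOn (fun x => x * gaussPDF x) (Ioi t) := by
    refine integrableOn_Ioi_deriv_of_nonneg' (g := fun y => -(gaussPDF y)) ?_ ?_
      (by simpa using tendsto_gaussPDF_atTop.neg)
    · intro x _
      exact ((hasDerivAt_gaussPDF x).neg).congr_deriv (by ring)
    · intro x hx
      exact mul_nonneg (le_trans ht.le (le_of_lt hx)) (gaussPDF_pos x).le
  calc t * gaussQ t = ∫ x in Ioi t, t * gaussPDF x := by
        unfold gaussQ; rw [MeasureTheory.integral_const_mul]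
    _ ≤ ∫ x in Ioi t, x * gaussPDF x := by
        refine setIntegral_mono_on (integrable_gaussPDF.integrableOn.const_mul t) hint
          measurableSet_Ioi fun x hx => ?_
        exact mul_le_mul_of_nonneg_right (le_of_lt hx) (gaussPDF_pos x).le
    _ = gaussPDF t := integral_xGaussPDF ht.le

lemma millsR_pos (t : ℝ) : 0 < millsR t := div_pos (gaussQ_pos t) (gaussPDF_pos t)

lemma gaussQ_eq_millsR (t : ℝ) : gaussQ t = millsR t * gaussPDF t := by
  rw [millsR, div_mul_cancel₀ _ (gaussPDF_pos t).ne']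

lemma hasDerivAt_millsR (t : ℝ) : HasDerivAt millsR (t * millsR t - 1) t := by
  have h := (hasDerivAt_gaussQ t).div (hasDerivAt_gaussPDF t) (gaussPDF_pos t).ne'
  have heq : t * millsR t - 1
      = (-gaussPDF t * gaussPDF t - gaussQ t * (-t * gaussPDF t)) / gaussPDF t ^ 2 := by
    rw [millsR]
    have hφ := (gaussPDF_pos t).ne'
    field_simp
    ring
  rw [heq]
  exact h

lemma millsR_deriv_nonpos (t : ℝ) : t * millsR t - 1 ≤ 0 := by
  rcases le_or_gt t 0 with h | h
  · nlinarith [millsR_pos t]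
  · have hm := mills_ineq h
    have hφ := gaussPDF_pos t
    rw [millsR, sub_nonpos, mul_div_assoc', div_le_one hφ]
    exact hm

lemma millsR_antitone : Antitone millsR := by
  apply antitone_of_deriv_nonpos
  · exact fun t => (hasDerivAt_millsR t).differentiableAt
  · intro t
    rw [(hasDerivAt_millsR t).deriv]
    exact millsR_deriv_nonpos t

lemma gaussQ_neg (a : ℝ) : gaussQ (-a) = 1 - gaussQ a := by
  have h1 : (∫ x in Iic a, gaussPDF (-x)) = ∫ x in Ioi (-a), gaussPDF x :=
    integral_comp_neg_Iic a gaussPDF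
  have h2 : (∫ x in Iic a, gaussPDF (-x)) = ∫ x in Iic a, gaussPDF x :=
    setIntegral_congr_fun measurableSet_Iic fun x _ => gaussPDF_even x
  have h3 : (∫ x in Iic a, gaussPDF x) + ∫ x in Ioi a, gaussPDF x = 1 := by
    rw [integral_Iic_add_Ioi integrable_gaussPDF.integrableOn integrable_gaussPDF.integrableOn]
    exact integral_gaussPDF
  unfold gaussQ
  rw [← h1, h2]
  linarith

lemma exp_lb : (2.3238 : ℝ) ≤ Real.exp (169/200) := by
  have h := Real.sum_le_exp_of_nonneg (by norm_num : (0:ℝ) ≤ 169/200) 5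
  refine le_trans ?_ h
  simp only [Finset.sum_range_succ, Finset.sum_range_zero, Nat.factorial]
  norm_num

lemma sqrt_two_pi_lb : (2.506 : ℝ) ≤ Real.sqrt (2 * Real.pi) := by
  rw [show (2.506:ℝ) = Real.sqrt (2.506 ^ 2) from (Real.sqrt_sq (by norm_num)).symm]
  exact Real.sqrt_le_sqrt (by nlinarith [Real.pi_gt_d6])

lemma gaussPDF_13 : gaussPDF 1.3 ≤ 13/75 := by
  unfold gaussPDF
  have h1 : Real.exp (-(1.3:ℝ) ^ 2 / 2) ≤ 1/2.3238 := by
    rw [show (-(1.3:ℝ) ^ 2 / 2) = -(169/200 : ℝ) by norm_num, Real.exp_neg, one_div]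
    exact inv_anti₀ (by norm_num) exp_lb
  have h2 : (Real.sqrt (2 * Real.pi))⁻¹ ≤ (2.506:ℝ)⁻¹ :=
    inv_anti₀ (by norm_num) sqrt_two_pi_lb
  calc (Real.sqrt (2 * Real.pi))⁻¹ * Real.exp (-(1.3:ℝ) ^ 2 / 2)
      ≤ (2.506:ℝ)⁻¹ * (1/2.3238) := by
        refine mul_le_mul h2 h1 (Real.exp_pos _).le (by norm_num)
    _ ≤ 13/75 := by norm_num

lemma key_at_base : gaussPDF (-1.3) ≤ 0.2 * gaussQ (-1.3) := by
  rw [show (-1.3:ℝ) = -(1.3:ℝ) by norm_num, gaussQ_neg, gaussPDF_even]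
  have hm : (1.3:ℝ) * gaussQ 1.3 ≤ gaussPDF 1.3 := mills_ineq (by norm_num)
  have h13 : gaussPDF 1.3 ≤ 13/75 := gaussPDF_13
  nlinarith

lemma tendsto_G_atTop :
    Tendsto (fun t => (t + 1.5) * gaussQ t - gaussPDF t) atTop (𝓝 0) := by
  have h1 : Tendsto (fun t => (t + 1.5) * gaussQ t) atTop (𝓝 0) := by
    apply squeeze_zero' (g := fun t => 2.5 * gaussPDF t)
    · filter_upwards [eventually_ge_atTop (1:ℝ)] with t ht
      exact mul_nonneg (by linarith) (gaussQ_pos t).le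
    · filter_upwards [eventually_ge_atTop (1:ℝ)] with t ht
      have hm := mills_ineq (by linarith : (0:ℝ) < t)
      have hq := (gaussQ_pos t).le
      nlinarith
    · simpa using tendsto_gaussPDF_atTop.const_mul (2.5:ℝ)
  simpa using h1.sub tendsto_gaussPDF_atTop

lemma hasDerivAt_G (t : ℝ) :
    HasDerivAt (fun s => (s + 1.5) * gaussQ s - gaussPDF s)
      (gaussQ t - 1.5 * gaussPDF t) t := by
  have h := (((hasDerivAt_id t).add_const 1.5).mul (hasDerivAt_gaussQ t)).sub
    (hasDerivAt_gaussPDF t)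
  refine h.congr_deriv ?_
  simp only [id_eq]
  ring

lemma key_ineq {t : ℝ} (ht : -1.3 ≤ t) : gaussPDF t ≤ (t + 1.5) * gaussQ t := by
  set G : ℝ → ℝ := fun s => (s + 1.5) * gaussQ s - gaussPDF s with hG
  have hdiffG : Differentiable ℝ G := fun s => (hasDerivAt_G s).differentiableAt
  have hderivG : ∀ s, deriv G s = gaussQ s - 1.5 * gaussPDF s := fun s => (hasDerivAt_G s).deriv
  suffices h : 0 ≤ G t by
    simp only [hG] at h; linarith
  rcases le_or_gt (millsR t) 1.5 with h15 | h15
  · -- G is antitone on [t, ∞) and tends to 0, so G t ≥ 0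
    have hanti : AntitoneOn G (Ici t) := by
      refine antitoneOn_of_deriv_nonpos (convex_Ici t) hdiffG.continuous.continuousOn
        hdiffG.differentiableOn ?_
      intro s hs
      rw [interior_Ici] at hs
      rw [hderivG]
      have hRs : millsR s ≤ 1.5 := le_trans (millsR_antitone (le_of_lt hs)) h15
      have := gaussQ_eq_millsR s
      nlinarith [gaussPDF_pos s]
    refine le_of_tendsto tendsto_G_atTop ?_
    filter_upwards [eventually_ge_atTop t] with s hs
    show G s ≤ G t
    exact hanti self_mem_Ici hs hs
  · -- G is monotone on [-1.3, t] and G (-1.3) ≥ 0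
    have hmono : MonotoneOn G (Icc (-1.3) t) := by
      refine monotoneOn_of_deriv_nonneg (convex_Icc _ _) hdiffG.continuous.continuousOn
        hdiffG.differentiableOn ?_
      intro s hs
      rw [interior_Icc] at hs
      rw [hderivG]
      have hRs : 1.5 ≤ millsR s := le_trans h15.le (millsR_antitone hs.2.le)
      have := gaussQ_eq_millsR s
      nlinarith [gaussPDF_pos s]
    have h0 : 0 ≤ G (-1.3) := by
      have := key_at_base
      simp only [hG]
      norm_num at this ⊢
      linarith
    calc (0:ℝ) ≤ G (-1.3) := h0
      _ ≤ G t := hmono (left_mem_Icc.mpr ht) (right_mem_Icc.mpr ht) ht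

lemma hasDerivAt_H (s : ℝ) :
    HasDerivAt (fun u => millsR u * Real.exp (1.5 * u))
      (((s + 1.5) * millsR s - 1) * Real.exp (1.5 * s)) s := by
  have he : HasDerivAt (fun u : ℝ => Real.exp (1.5 * u)) (Real.exp (1.5 * s) * 1.5) s := by
    simpa using ((hasDerivAt_id s).const_mul 1.5).exp
  have h := (hasDerivAt_millsR s).mul he
  refine h.congr_deriv ?_
  ring

end MillsAux

/-- For all real `τ ≥ −1.3` and all `δ ≥ 0`,
`R(τ) ≥ R(τ + δ) ≥ R(τ)·exp(−1.5·δ)`. -/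
theorem mills_ratio_multiplicative_bound (τ δ : ℝ) (hτ : -1.3 ≤ τ) (hδ : 0 ≤ δ) :
    millsR (τ + δ) ≤ millsR τ ∧ millsR τ * Real.exp (-1.5 * δ) ≤ millsR (τ + δ) := by
  constructor
  · exact millsR_antitone (by linarith)
  · -- H u = millsR u * exp (1.5 u) is monotone on [-1.3, ∞)
    have hmono : MonotoneOn (fun u => millsR u * Real.exp (1.5 * u)) (Ici (-1.3)) := by
      refine monotoneOn_of_deriv_nonneg (convex_Ici _)
        (Differentiable.continuous (fun s => (hasDerivAt_H s).differentiableAt)).continuousOn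
        (Differentiable.differentiableOn (fun s => (hasDerivAt_H s).differentiableAt)) ?_
      intro s hs
      rw [interior_Ici] at hs
      rw [(hasDerivAt_H s).deriv]
      have hk := key_ineq (le_of_lt hs)
      have hφ := gaussPDF_pos s
      have hR : 1 ≤ (s + 1.5) * millsR s := by
        rw [millsR, mul_div_assoc', le_div_iff₀ hφ, one_mul]
        exact hk
      have := Real.exp_pos (1.5 * s)
      nlinarith
    have hkey := hmono (mem_Ici.mpr hτ) (mem_Ici.mpr (by linarith : (-1.3:ℝ) ≤ τ + δ))
      (by linarith : τ ≤ τ + δ)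
    simp only at hkey
    calc millsR τ * Real.exp (-1.5 * δ)
        = (millsR τ * Real.exp (1.5 * τ)) * Real.exp (-(1.5 * (τ + δ))) := by
          rw [mul_assoc, ← Real.exp_add]
          congr 2
          ring
      _ ≤ (millsR (τ + δ) * Real.exp (1.5 * (τ + δ))) * Real.exp (-(1.5 * (τ + δ))) :=
          mul_le_mul_of_nonneg_right hkey (Real.exp_pos _).le
      _ = millsR (τ + δ) := by
          rw [mul_assoc, ← Real.exp_add]
          simp
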